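/- Let n ≥ 4 be an even integer and q a nonzero complex number. At every critical point p of W_0 the following relations hold: z_2(p)^{n+1} = 4q·z_2(p); 2q·z_1(p)·z_2(p) = z_2(p)^{n/2+1}; and q·z_1(p)^2 = 1 if n ≡ 2 (mod 4), while 2q^2·z_1(p)^2 = −2q + z_2(p)^n if n ≡ 0 (mod 4). -/

import Mathlib

open Finset

/-- One-based access to the coordinates of a point `z ∈ ℂⁿ`: `zc n z j = z_j` for
`1 ≤ j ≤ n` (and `0` for out-of-range indices, which are never used). -/
noncomputable def zc (n : ℕ) (z : Fin n → ℂ) (j : ℕ) : ℂ :=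
  if h : 1 ≤ j ∧ j ≤ n then z ⟨j - 1, by omega⟩ else 0

/-- The mirror Landau–Ginzburg potential of the quadric `Qⁿ`:
`W₀(z) = q z₁² z_n/(z₁⋯z_n − 1) + z₂ + ∑_{i=2}^{n−1} z_i z_{i+1}`,
defined on `Zⁿ = {z ∈ ℂⁿ : z₁⋯z_n ≠ 1}`. -/
noncomputable def W0 (n : ℕ) (q : ℂ) (z : Fin n → ℂ) : ℂ :=
  q * (zc n z 1) ^ 2 * zc n z n / ((∏ j, z j) - 1)
    + zc n z 2 + ∑ i ∈ Finset.Icc 2 (n - 1), zc n z i * zc n z (i + 1)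

/-- `z` is a critical point of `W₀` in `Zⁿ`: `z₁⋯z_n ≠ 1` and all `n` partial derivatives
`∂W₀/∂z_j` vanish at `z`. -/
def IsCritPt (n : ℕ) (q : ℂ) (z : Fin n → ℂ) : Prop :=
  (∏ j, z j) ≠ 1 ∧
    ∀ j : Fin n, deriv (fun t => W0 n q (Function.update z j t)) (z j) = 0

/-- Membership in `V(I₁)`: `z_{2i+1} = 1` for `1 ≤ i ≤ n/2−1`, `z_{2i} = z_n` for
`1 ≤ i ≤ n/2`, `q z₁² = 1`, and `z₁ z_n^{n/2} = 2`. -/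
def MemV1 (n : ℕ) (q : ℂ) (z : Fin n → ℂ) : Prop :=
  (∀ i : ℕ, 1 ≤ i → i ≤ n / 2 - 1 → zc n z (2 * i + 1) = 1) ∧
    (∀ i : ℕ, 1 ≤ i → i ≤ n / 2 → zc n z (2 * i) = zc n z n) ∧
    q * (zc n z 1) ^ 2 = 1 ∧ zc n z 1 * (zc n z n) ^ (n / 2) = 2

/-- Membership in `V(I₂)`: `z_{2i+1} = (−1)^i` for `1 ≤ i ≤ n/2−1`, `z_{2i} = 0` for
`1 ≤ i ≤ n/2`, and `q z₁² = (−1)^{(n−2)/2}`. -/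
def MemV2 (n : ℕ) (q : ℂ) (z : Fin n → ℂ) : Prop :=
  (∀ i : ℕ, 1 ≤ i → i ≤ n / 2 - 1 → zc n z (2 * i + 1) = (-1 : ℂ) ^ i) ∧
    (∀ i : ℕ, 1 ≤ i → i ≤ n / 2 → zc n z (2 * i) = 0) ∧
    q * (zc n z 1) ^ 2 = (-1 : ℂ) ^ ((n - 2) / 2)

lemma zc_self (n : ℕ) (z : Fin n → ℂ) (j : Fin n) : zc n z (j.val + 1) = z j := by
  have h : 1 ≤ j.val + 1 ∧ j.val + 1 ≤ n := ⟨by omega, j.isLt⟩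
  have hj : (⟨j.val + 1 - 1, by omega⟩ : Fin n) = j := by ext; simp
  rw [zc, dif_pos h, hj]

lemma zc_update (n : ℕ) (z : Fin n → ℂ) (j : Fin n) (t : ℂ) (i : ℕ) :
    zc n (Function.update z j t) i = if i = j.val + 1 then t else zc n z i := by
  by_cases h : 1 ≤ i ∧ i ≤ n
  · rw [zc, dif_pos h, zc, dif_pos h]
    rcases eq_or_ne i (j.val + 1) with he | he
    · rw [if_pos he]
      have hj : (⟨i - 1, by omega⟩ : Fin n) = j := by ext; simp; omega
      rw [hj, Function.update_self]
    · rw [if_neg he]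
      have hj : (⟨i - 1, by omega⟩ : Fin n) ≠ j := by
        intro hc
        have := congrArg Fin.val hc
        simp at this
        omega
      rw [Function.update_of_ne hj]
  · rw [zc, dif_neg h, zc, dif_neg h, if_neg]
    intro he
    have := j.isLt
    omega

lemma hasDerivAt_ite (c : Prop) [Decidable c] (a t₀ : ℂ) :
    HasDerivAt (fun t => if c then t else a) (if c then 1 else 0) t₀ := by
  by_cases h : c
  · simpa [h] using hasDerivAt_id' t₀
  · simpa [h] using hasDerivAt_const t₀ a

set_option maxHeartbeats 1000000 in
lemma crit_eq (n : ℕ) (hn : 4 ≤ n) (q : ℂ) (z : Fin n → ℂ)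
    (hP : (∏ i, z i) ≠ 1) (j : Fin n)
    (hd : deriv (fun t => W0 n q (Function.update z j t)) (z j) = 0) :
    (if j.val + 1 = 1 then 2 * q * zc n z 1 * zc n z n
      else if j.val + 1 = n then q * (zc n z 1) ^ 2 else 0) * ((∏ i, z i) - 1)
    - q * (zc n z 1) ^ 2 * zc n z n * (∏ i ∈ Finset.univ.erase j, z i)
    + ((if j.val + 1 = 2 then 1 else 0)
       + (if j.val + 1 ∈ Finset.Icc 2 (n - 1) then zc n z (j.val + 2) else 0)
       + (if j.val ∈ Finset.Icc 2 (n - 1) then zc n z j.val else 0)) * ((∏ i, z i) - 1) ^ 2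
      = 0 := by
  set M : ℂ := ∏ i ∈ Finset.univ.erase j, z i with hM
  have hzM : z j * M = ∏ i, z i := Finset.mul_prod_erase univ z (mem_univ j)
  set t₀ : ℂ := z j with ht₀
  -- rewrite the function
  have hfun : (fun t => W0 n q (Function.update z j t)) =
      fun t => q * (if 1 = j.val + 1 then t else zc n z 1) ^ 2
          * (if n = j.val + 1 then t else zc n z n) / (t * M - 1)
        + (if 2 = j.val + 1 then t else zc n z 2)
        + ∑ i ∈ Finset.Icc 2 (n - 1),
            (if i = j.val + 1 then t else zc n z i)
              * (if i + 1 = j.val + 1 then t else zc n z (i + 1)) := by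
    funext t
    rw [W0, Finset.prod_update_of_mem (mem_univ j), ← Finset.erase_eq]
    simp only [zc_update]
    rw [← hM]
  -- denominator nonzero at t₀
  have hDne : t₀ * M - 1 ≠ 0 := by
    rw [hzM]
    exact sub_ne_zero.mpr hP
  -- build HasDerivAt
  have h1 := hasDerivAt_ite (1 = j.val + 1) (zc n z 1) t₀
  have hnn := hasDerivAt_ite (n = j.val + 1) (zc n z n) t₀
  have h2 := hasDerivAt_ite (2 = j.val + 1) (zc n z 2) t₀
  have hNum := ((h1.pow 2).const_mul q).mul hnn
  have hDen : HasDerivAt (fun t : ℂ => t * M - 1) (1 * M) t₀ :=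
    ((hasDerivAt_id t₀).mul_const M).sub_const 1
  have hQ := hNum.div hDen hDne
  have hS : HasDerivAt
      (fun t => ∑ i ∈ Finset.Icc 2 (n - 1),
          (if i = j.val + 1 then t else zc n z i)
            * (if i + 1 = j.val + 1 then t else zc n z (i + 1)))
      (∑ i ∈ Finset.Icc 2 (n - 1),
          ((if i = j.val + 1 then (1:ℂ) else 0)
              * (if i + 1 = j.val + 1 then t₀ else zc n z (i + 1))
            + (if i = j.val + 1 then t₀ else zc n z i)
              * (if i + 1 = j.val + 1 then (1:ℂ) else 0))) t₀ :=
    HasDerivAt.fun_sum fun i _ =>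
      (hasDerivAt_ite _ _ _).mul (hasDerivAt_ite _ _ _)
  have htot := (hQ.add h2).add hS
  rw [hfun] at hd
  have hd0 := hd.symm.trans htot.deriv
  simp only [Pi.add_apply, Pi.mul_apply, Pi.div_apply, Pi.pow_apply] at hd0
  have hite : ∀ m : ℕ, (if m = j.val + 1 then t₀ else zc n z m) = zc n z m := by
    intro m
    split_ifs with h
    · rw [h, zc_self]
    · rfl
  simp only [hite] at hd0
  have hsum : (∑ i ∈ Finset.Icc 2 (n - 1),
      ((if i = j.val + 1 then (1:ℂ) else 0) * zc n z (i + 1)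
        + zc n z i * (if i + 1 = j.val + 1 then (1:ℂ) else 0)))
      = (if j.val + 1 ∈ Finset.Icc 2 (n - 1) then zc n z (j.val + 2) else 0)
        + (if j.val ∈ Finset.Icc 2 (n - 1) then zc n z j.val else 0) := by
    rw [Finset.sum_add_distrib]
    congr 1
    · calc ∑ i ∈ Finset.Icc 2 (n - 1), (if i = (j:ℕ) + 1 then (1:ℂ) else 0) * zc n z (i + 1)
          = ∑ i ∈ Finset.Icc 2 (n - 1), (if i = (j:ℕ) + 1 then zc n z (i + 1) else 0) := by
            refine Finset.sum_congr rfl fun i _ => ?_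
            split_ifs <;> ring
        _ = if (j:ℕ) + 1 ∈ Finset.Icc 2 (n - 1) then zc n z ((j:ℕ) + 1 + 1) else 0 :=
            Finset.sum_ite_eq' _ _ _
        _ = if (j:ℕ) + 1 ∈ Finset.Icc 2 (n - 1) then zc n z ((j:ℕ) + 2) else 0 := rfl
    · calc ∑ i ∈ Finset.Icc 2 (n - 1), zc n z i * (if i + 1 = (j:ℕ) + 1 then (1:ℂ) else 0)
          = ∑ i ∈ Finset.Icc 2 (n - 1), (if i = (j:ℕ) then zc n z i else 0) := by
            refine Finset.sum_congr rfl fun i _ => ?_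
            by_cases h : i = (j:ℕ)
            · simp [h]
            · rw [if_neg (show ¬ i + 1 = (j:ℕ) + 1 by omega), if_neg h]
              ring
        _ = if (j:ℕ) ∈ Finset.Icc 2 (n - 1) then zc n z (j:ℕ) else 0 :=
            Finset.sum_ite_eq' _ _ _
  rw [hsum] at hd0
  rw [← hzM]
  have flip : ∀ (a : ℕ) (x y : ℂ),
      (if a = (j:ℕ) + 1 then x else y) = (if (j:ℕ) + 1 = a then x else y) := by
    intro a x y
    split_ifs with h1 h2 <;> first | rfl | omega
  rw [flip 1, flip 2, flip n] at hd0
  have hd1 := congrArg (fun x : ℂ => x * (t₀ * M - 1) ^ 2) hd0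
  simp only [zero_mul, add_mul, div_mul_cancel₀ _ (pow_ne_zero 2 hDne)] at hd1
  split_ifs at hd1 ⊢ <;>
    first
      | omega
      | linear_combination hd1
      | linear_combination -hd1

noncomputable def Mer (n : ℕ) (z : Fin n → ℂ) (k : ℕ) : ℂ :=
  if h : 1 ≤ k ∧ k ≤ n then ∏ i ∈ Finset.univ.erase (⟨k - 1, by omega⟩ : Fin n), z i else 0

lemma zc_mul_Mer (n : ℕ) (z : Fin n → ℂ) (k : ℕ) (hk1 : 1 ≤ k) (hk2 : k ≤ n) :
    zc n z k * Mer n z k = ∏ i, z i := by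
  rw [zc, Mer, dif_pos ⟨hk1, hk2⟩, dif_pos ⟨hk1, hk2⟩]
  exact Finset.mul_prod_erase univ z (mem_univ _)

section Eqs

variable (n : ℕ) (hn : 4 ≤ n) (q : ℂ) (z : Fin n → ℂ)
  (hP : (∏ i, z i) ≠ 1)
  (hd : ∀ j : Fin n, deriv (fun t => W0 n q (Function.update z j t)) (z j) = 0)

include hn hP hd

lemma E1 : 2 * q * zc n z 1 * zc n z n * ((∏ i, z i) - 1)
    = q * (zc n z 1) ^ 2 * zc n z n * Mer n z 1 := by
  have h := crit_eq n hn q z hP ⟨0, by omega⟩ (hd ⟨0, by omega⟩)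
  simp only [Fin.val_mk] at h
  rw [Mer, dif_pos ⟨by omega, by omega⟩]
  rw [if_pos trivial, if_neg (show ¬(0 + 1 = 2) by omega),
    if_neg (by rw [Finset.mem_Icc]; omega),
    if_neg (by rw [Finset.mem_Icc]; omega)] at h
  linear_combination h

lemma E2 : q * (zc n z 1) ^ 2 * zc n z n * Mer n z 2
    = (1 + zc n z 3) * ((∏ i, z i) - 1) ^ 2 := by
  have h := crit_eq n hn q z hP ⟨1, by omega⟩ (hd ⟨1, by omega⟩)
  simp only [Fin.val_mk] at h
  rw [Mer, dif_pos ⟨by omega, by omega⟩]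
  rw [if_neg (show ¬(1 + 1 = 1) by omega), if_neg (show ¬(1 + 1 = n) by omega),
    if_pos trivial,
    if_pos (Finset.mem_Icc.mpr ⟨by omega, by omega⟩),
    if_neg (by rw [Finset.mem_Icc]; omega),
    show (1 : ℕ) + 2 = 3 from rfl] at h
  linear_combination -h

lemma Eint (k : ℕ) (h3 : 3 ≤ k) (hk : k ≤ n - 1) :
    q * (zc n z 1) ^ 2 * zc n z n * Mer n z k
      = (zc n z (k + 1) + zc n z (k - 1)) * ((∏ i, z i) - 1) ^ 2 := by
  have h := crit_eq n hn q z hP ⟨k - 1, by omega⟩ (hd ⟨k - 1, by omega⟩)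
  simp only [Fin.val_mk] at h
  rw [Mer, dif_pos ⟨by omega, by omega⟩]
  rw [show k - 1 + 1 = k by omega, show k - 1 + 2 = k + 1 by omega] at h
  rw [if_neg (by omega), if_neg (by omega), if_neg (by omega),
    if_pos (Finset.mem_Icc.mpr ⟨by omega, by omega⟩),
    if_pos (Finset.mem_Icc.mpr ⟨by omega, by omega⟩)] at h
  linear_combination -h

lemma En : q * (zc n z 1) ^ 2 * ((∏ i, z i) - 1)
      + zc n z (n - 1) * ((∏ i, z i) - 1) ^ 2
    = q * (zc n z 1) ^ 2 * zc n z n * Mer n z n := by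
  have h := crit_eq n hn q z hP ⟨n - 1, by omega⟩ (hd ⟨n - 1, by omega⟩)
  simp only [Fin.val_mk] at h
  rw [Mer, dif_pos ⟨by omega, by omega⟩]
  rw [show n - 1 + 1 = n by omega] at h
  rw [if_neg (by omega), if_pos rfl, if_neg (by omega),
    if_neg (by rw [Finset.mem_Icc]; omega),
    if_pos (Finset.mem_Icc.mpr ⟨by omega, by omega⟩)] at h
  linear_combination h

end Eqs

lemma odd_chain (n : ℕ) (hn : 4 ≤ n) (hev : Even n) (w : ℕ → ℂ)
    (h3 : w 3 = -1) (hstep : ∀ k, 3 ≤ k → k ≤ n - 1 → w (k + 1) = -w (k - 1)) :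
    w (n - 1) = (-1 : ℂ) ^ (n / 2 - 1) := by
  obtain ⟨m, hm⟩ := hev
  have claim : ∀ i, 1 ≤ i → 2 * i + 1 ≤ n - 1 → w (2 * i + 1) = (-1 : ℂ) ^ i := by
    intro i
    induction i with
    | zero => intro h1 _; omega
    | succ j ih =>
      intro h1 h2
      rcases Nat.eq_zero_or_pos j with hj | hj
      · subst hj; simpa using h3
      · have hw := hstep (2 * j + 2) (by omega) (by omega)
        rw [show 2 * j + 2 - 1 = 2 * j + 1 by omega] at hw
        rw [show 2 * (j + 1) + 1 = 2 * j + 2 + 1 by ring, hw, ih (by omega) (by omega)]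
        ring
  have h := claim (n / 2 - 1) (by omega) (by omega)
  rwa [show 2 * (n / 2 - 1) + 1 = n - 1 by omega] at h

lemma prod_eval (n : ℕ) (hn : 4 ≤ n) (hev : Even n) (z : Fin n → ℂ)
    (hodd : ∀ i, 1 ≤ i → i ≤ n / 2 - 1 → zc n z (2 * i + 1) = 1)
    (heven : ∀ i, 1 ≤ i → i ≤ n / 2 → zc n z (2 * i) = zc n z 2) :
    (∏ i, z i) = zc n z 1 * (zc n z 2) ^ (n / 2) := by
  obtain ⟨m, hm⟩ := hev
  have h0 : (∏ i, z i) = ∏ i ∈ Finset.range n, zc n z (i + 1) := by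
    rw [← Fin.prod_univ_eq_prod_range (fun i => zc n z (i + 1)) n]
    exact Finset.prod_congr rfl fun i _ => (zc_self n z i).symm
  have claim : ∀ m', m' ≤ n / 2 - 1 →
      ∏ i ∈ Finset.range (2 * m' + 1), zc n z (i + 2) = (zc n z 2) ^ (m' + 1) := by
    intro m'
    induction m' with
    | zero => intro _; norm_num [Finset.prod_range_one]
    | succ j ih =>
      intro hj
      rw [show 2 * (j + 1) + 1 = (2 * j + 1) + 1 + 1 by ring, Finset.prod_range_succ,
        Finset.prod_range_succ, ih (by omega)]
      have e1 : zc n z (2 * j + 1 + 2) = 1 := by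
        have h := hodd (j + 1) (by omega) (by omega)
        rwa [show 2 * (j + 1) + 1 = 2 * j + 1 + 2 by ring] at h
      have e2 : zc n z (2 * j + 1 + 1 + 2) = zc n z 2 := by
        have h := heven (j + 2) (by omega) (by omega)
        rwa [show 2 * (j + 2) = 2 * j + 1 + 1 + 2 by ring] at h
      rw [e1, e2]; ring
  have h1 : ∏ i ∈ Finset.range ((n - 1) + 1), zc n z (i + 1)
      = (∏ i ∈ Finset.range (n - 1), zc n z (i + 1 + 1)) * zc n z (0 + 1) :=
    Finset.prod_range_succ' (fun i => zc n z (i + 1)) (n - 1)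
  rw [Nat.sub_add_cancel (by omega : 1 ≤ n)] at h1
  have h2 := claim (n / 2 - 1) (by omega)
  rw [show 2 * (n / 2 - 1) + 1 = n - 1 by omega, show n / 2 - 1 + 1 = n / 2 by omega] at h2
  have h3 : (∏ i ∈ Finset.range (n - 1), zc n z (i + 1 + 1))
      = ∏ i ∈ Finset.range (n - 1), zc n z (i + 2) := rfl
  rw [h0, h1, h3, h2]
  have : zc n z (0 + 1) = zc n z 1 := rfl
  rw [this, mul_comm]

/-- **Relations of the Milnor ring at the critical points.**
For even `n ≥ 4`, `q ≠ 0`, and every critical point `p` of `W₀`: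
`z₂(p)^{n+1} = 4q·z₂(p)`, `2q·z₁(p)·z₂(p) = z₂(p)^{n/2+1}`, and `q·z₁(p)² = 1` if
`n ≡ 2 (mod 4)`, while `2q²·z₁(p)² = −2q + z₂(p)ⁿ` if `n ≡ 0 (mod 4)`. -/
theorem quadric_mirror_milnor_relations (n : ℕ) (hn : 4 ≤ n) (hev : Even n)
    (q : ℂ) (hq : q ≠ 0) (z : Fin n → ℂ) (hz : IsCritPt n q z) :
    (zc n z 2) ^ (n + 1) = 4 * q * zc n z 2 ∧
    2 * q * zc n z 1 * zc n z 2 = (zc n z 2) ^ (n / 2 + 1) ∧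
    (n % 4 = 2 → q * (zc n z 1) ^ 2 = 1) ∧
    (n % 4 = 0 → 2 * q ^ 2 * (zc n z 1) ^ 2 = -2 * q + (zc n z 2) ^ n) := by
  obtain ⟨hP, hd⟩ := hz
  obtain ⟨m, hm⟩ := hev
  have hD : (∏ i, z i) - 1 ≠ 0 := sub_ne_zero.mpr hP
  have hE1 := E1 n hn q z hP hd
  have hE2 := E2 n hn q z hP hd
  have hEint := Eint n hn q z hP hd
  have hEn := En n hn q z hP hd
  have chain0 : q * zc n z 1 ^ 2 * zc n z n = 0 →
      zc n z 3 = -1 ∧ (∀ k, 3 ≤ k → k ≤ n - 1 → zc n z (k + 1) = -zc n z (k - 1)) := by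
    intro hA0
    constructor
    · have h' : (1 + zc n z 3) * ((∏ i, z i) - 1) ^ 2 = 0 := by
        rw [← hE2, hA0, zero_mul]
      rcases mul_eq_zero.mp h' with h'' | h''
      · linear_combination h''
      · exact absurd ((pow_eq_zero_iff (by norm_num : (2:ℕ) ≠ 0)).mp h'') hD
    · intro k h3 hk
      have h' : (zc n z (k + 1) + zc n z (k - 1)) * ((∏ i, z i) - 1) ^ 2 = 0 := by
        rw [← hEint k h3 hk, hA0, zero_mul]
      rcases mul_eq_zero.mp h' with h'' | h''
      · linear_combination h''
      · exact absurd ((pow_eq_zero_iff (by norm_num : (2:ℕ) ≠ 0)).mp h'') hD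
  by_cases hz1 : zc n z 1 = 0
  · exfalso
    have hA0 : q * zc n z 1 ^ 2 * zc n z n = 0 := by rw [hz1]; ring
    obtain ⟨h3, hstep⟩ := chain0 hA0
    have hendpt : zc n z (n - 1) = 0 := by
      have h := hEn
      rw [hz1] at h
      have h' : zc n z (n - 1) * ((∏ i, z i) - 1) ^ 2 = 0 := by linear_combination h
      rcases mul_eq_zero.mp h' with h'' | h''
      · exact h''
      · exact absurd ((pow_eq_zero_iff (by norm_num : (2:ℕ) ≠ 0)).mp h'') hD
    have hsign := odd_chain n hn ⟨m, hm⟩ (zc n z) h3 hstep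
    rw [hendpt] at hsign
    exact pow_ne_zero _ (by norm_num : (-1:ℂ) ≠ 0) hsign.symm
  by_cases hzn : zc n z n = 0
  · -- Case II
    have hA0 : q * zc n z 1 ^ 2 * zc n z n = 0 := by rw [hzn]; ring
    obtain ⟨h3, hstep⟩ := chain0 hA0
    have hP0 : (∏ i, z i) = 0 := by
      have h := zc_mul_Mer n z n (by omega) (by omega)
      rw [hzn, zero_mul] at h
      exact h.symm
    have hD1 : (∏ i, z i) - 1 = -1 := by rw [hP0]; ring
    have hn1 : zc n z (n - 1) = q * zc n z 1 ^ 2 := by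
      have h := hEn
      rw [hD1, hzn] at h
      linear_combination h
    have hsign := odd_chain n hn ⟨m, hm⟩ (zc n z) h3 hstep
    rw [hn1] at hsign
    have hw2 : zc n z 2 = 0 := by
      have hn2 : zc n z (n - 2) = 0 := by
        have h := hstep (n - 1) (by omega) le_rfl
        rw [show n - 1 + 1 = n by omega, show n - 1 - 1 = n - 2 by omega, hzn] at h
        linear_combination h
      have claim : ∀ i, i ≤ n / 2 - 2 → zc n z (2 * i + 2) = (-1:ℂ) ^ i * zc n z 2 := by
        intro i
        induction i with
        | zero => intro _; norm_num
        | succ j ih =>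
          intro hj
          have hs := hstep (2 * j + 3) (by omega) (by omega)
          rw [show 2 * j + 3 + 1 = 2 * (j + 1) + 2 by ring,
            show 2 * j + 3 - 1 = 2 * j + 2 by omega] at hs
          rw [hs, ih (by omega)]
          ring
      have h := claim (n / 2 - 2) (by omega)
      rw [show 2 * (n / 2 - 2) + 2 = n - 2 by omega, hn2] at h
      exact ((mul_eq_zero.mp h.symm).resolve_left
        (pow_ne_zero _ (by norm_num : (-1:ℂ) ≠ 0)))
    refine ⟨?_, ?_, ?_, ?_⟩
    · rw [hw2, zero_pow (by omega : n + 1 ≠ 0), mul_zero]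
    · rw [hw2, zero_pow (by omega : n / 2 + 1 ≠ 0), mul_zero]
    · intro h4
      rw [hsign]
      exact Even.neg_one_pow (by rw [Nat.even_iff]; omega)
    · intro h4
      have ho : ((-1:ℂ)) ^ (n / 2 - 1) = -1 :=
        Odd.neg_one_pow (by rw [Nat.odd_iff]; omega)
      rw [hw2, zero_pow (by omega : n ≠ 0)]
      linear_combination 2 * q * (hsign.trans ho)
  · -- Case III
    have hA : q * zc n z 1 ^ 2 * zc n z n ≠ 0 := by
      intro h
      rcases mul_eq_zero.mp h with h' | h'
      · rcases mul_eq_zero.mp h' with h'' | h''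
        · exact hq h''
        · exact hz1 ((pow_eq_zero_iff (by norm_num : (2:ℕ) ≠ 0)).mp h'')
      · exact hzn h'
    have hM1 : zc n z 1 * Mer n z 1 = ∏ i, z i := zc_mul_Mer n z 1 (by omega) (by omega)
    have hP2 : (∏ i, z i) = 2 := by
      have key : (q * zc n z 1 ^ 2 * zc n z n) * (2 * ((∏ i, z i) - 1))
          = (q * zc n z 1 ^ 2 * zc n z n) * (∏ i, z i) := by
        calc (q * zc n z 1 ^ 2 * zc n z n) * (2 * ((∏ i, z i) - 1))
            = (2 * q * zc n z 1 * zc n z n * ((∏ i, z i) - 1)) * zc n z 1 := by ring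
          _ = (q * zc n z 1 ^ 2 * zc n z n * Mer n z 1) * zc n z 1 := by rw [hE1]
          _ = (q * zc n z 1 ^ 2 * zc n z n) * (zc n z 1 * Mer n z 1) := by ring
          _ = (q * zc n z 1 ^ 2 * zc n z n) * (∏ i, z i) := by rw [hM1]
      have h := mul_left_cancel₀ hA key
      linear_combination h
    have hD2 : (∏ i, z i) - 1 = 1 := by rw [hP2]; ring
    have hMk : ∀ k, 1 ≤ k → k ≤ n → zc n z k * Mer n z k = 2 := fun k h1 h2 => by
      rw [zc_mul_Mer n z k h1 h2, hP2]
    have e2 : zc n z 2 + zc n z 2 * zc n z 3 = 2 * (q * zc n z 1 ^ 2 * zc n z n) := by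
      calc zc n z 2 + zc n z 2 * zc n z 3
          = (1 + zc n z 3) * ((∏ i, z i) - 1) ^ 2 * zc n z 2 := by rw [hD2]; ring
        _ = (q * zc n z 1 ^ 2 * zc n z n * Mer n z 2) * zc n z 2 := by rw [hE2]
        _ = (q * zc n z 1 ^ 2 * zc n z n) * (zc n z 2 * Mer n z 2) := by ring
        _ = 2 * (q * zc n z 1 ^ 2 * zc n z n) := by rw [hMk 2 (by omega) (by omega)]; ring
    have eint : ∀ k, 3 ≤ k → k ≤ n - 1 →
        zc n z k * zc n z (k + 1) + zc n z (k - 1) * zc n z k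
          = 2 * (q * zc n z 1 ^ 2 * zc n z n) := by
      intro k h3 hk
      calc zc n z k * zc n z (k + 1) + zc n z (k - 1) * zc n z k
          = (zc n z (k + 1) + zc n z (k - 1)) * ((∏ i, z i) - 1) ^ 2 * zc n z k := by
            rw [hD2]; ring
        _ = (q * zc n z 1 ^ 2 * zc n z n * Mer n z k) * zc n z k := by rw [hEint k h3 hk]
        _ = (q * zc n z 1 ^ 2 * zc n z n) * (zc n z k * Mer n z k) := by ring
        _ = 2 * (q * zc n z 1 ^ 2 * zc n z n) := by
            rw [hMk k (by omega) (by omega)]; ring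
    have en : zc n z (n - 1) * zc n z n = q * zc n z 1 ^ 2 * zc n z n := by
      have h2 : (q * zc n z 1 ^ 2 + zc n z (n - 1)) * zc n z n
          = 2 * (q * zc n z 1 ^ 2 * zc n z n) := by
        calc (q * zc n z 1 ^ 2 + zc n z (n - 1)) * zc n z n
            = (q * zc n z 1 ^ 2 * ((∏ i, z i) - 1)
                + zc n z (n - 1) * ((∏ i, z i) - 1) ^ 2) * zc n z n := by rw [hD2]; ring
          _ = (q * zc n z 1 ^ 2 * zc n z n * Mer n z n) * zc n z n := by rw [hEn]
          _ = (q * zc n z 1 ^ 2 * zc n z n) * (zc n z n * Mer n z n) := by ring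
          _ = 2 * (q * zc n z 1 ^ 2 * zc n z n) := by
              rw [hMk n (by omega) (by omega)]; ring
      linear_combination h2
    have pair : ∀ i, 1 ≤ i → i ≤ n / 2 - 1 →
        zc n z (2 * i) * zc n z (2 * i + 1)
            = 2 * (q * zc n z 1 ^ 2 * zc n z n) - zc n z 2 ∧
          zc n z (2 * i + 1) * zc n z (2 * i + 2) = zc n z 2 := by
      intro i
      induction i with
      | zero => intro h _; omega
      | succ j ih =>
        intro _ hj
        rcases Nat.eq_zero_or_pos j with hj0 | hj0
        · subst hj0
          constructor
          · have e : zc n z (2 * 1) * zc n z (2 * 1 + 1) = zc n z 2 * zc n z 3 := by norm_num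
            rw [e]; linear_combination e2
          · have h := eint 3 le_rfl (by omega)
            have e : zc n z (2 * 1 + 1) * zc n z (2 * 1 + 2) = zc n z 3 * zc n z 4 := by norm_num
            rw [e]; linear_combination h - e2
        · obtain ⟨ihA, ihB⟩ := ih (by omega) (by omega)
          have h1 := eint (2 * j + 2) (by omega) (by omega)
          have h2 := eint (2 * j + 3) (by omega) (by omega)
          rw [show 2 * j + 2 - 1 = 2 * j + 1 by omega,
            show 2 * j + 2 + 1 = 2 * j + 3 by ring] at h1
          rw [show 2 * j + 3 - 1 = 2 * j + 2 by omega,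
            show 2 * j + 3 + 1 = 2 * j + 4 by ring] at h2
          constructor
          · rw [show 2 * (j + 1) = 2 * j + 2 by ring, show 2 * j + 2 + 1 = 2 * j + 3 by ring]
            linear_combination h1 - ihB
          · rw [show 2 * (j + 1) + 1 = 2 * j + 3 by ring,
              show 2 * (j + 1) + 2 = 2 * j + 4 by ring]
            linear_combination h2 - h1 + ihB
    have hAw2 : q * zc n z 1 ^ 2 * zc n z n = zc n z 2 := by
      have h := (pair (n / 2 - 1) (by omega) (by omega)).2
      rw [show 2 * (n / 2 - 1) + 1 = n - 1 by omega,
        show 2 * (n / 2 - 1) + 2 = n by omega] at h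
      exact en.symm.trans h
    have hw2ne : zc n z 2 ≠ 0 := by rw [← hAw2]; exact hA
    have vals : ∀ i, 1 ≤ i → i ≤ n / 2 - 1 →
        zc n z (2 * i + 1) = 1 ∧ zc n z (2 * i + 2) = zc n z 2 := by
      intro i
      induction i with
      | zero => intro h _; omega
      | succ j ih =>
        intro _ hj
        obtain ⟨hpA, hpB⟩ := pair (j + 1) (by omega) (by omega)
        have hprev : zc n z (2 * (j + 1)) = zc n z 2 := by
          rcases Nat.eq_zero_or_pos j with h0 | h0
          · subst h0; norm_num
          · have h := (ih (by omega) (by omega)).2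
            rwa [show 2 * j + 2 = 2 * (j + 1) by ring] at h
        have hodd1 : zc n z (2 * (j + 1) + 1) = 1 := by
          have hcan : zc n z 2 * zc n z (2 * (j + 1) + 1) = zc n z 2 * 1 := by
            rw [mul_one, ← hprev]
            linear_combination hpA + 2 * hAw2 - hprev
          exact mul_left_cancel₀ hw2ne hcan
        refine ⟨hodd1, ?_⟩
        rw [hodd1, one_mul] at hpB
        exact hpB
    have hzn2 : zc n z n = zc n z 2 := by
      have h := (vals (n / 2 - 1) (by omega) (by omega)).2
      rwa [show 2 * (n / 2 - 1) + 2 = n by omega] at h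
    have hq1 : q * zc n z 1 ^ 2 = 1 := by
      have h : q * zc n z 1 ^ 2 * zc n z 2 = 1 * zc n z 2 := by
        linear_combination hAw2 - (q * zc n z 1 ^ 2) * hzn2 + hzn2 * 0
      exact mul_right_cancel₀ hw2ne h
    have hodd' : ∀ i, 1 ≤ i → i ≤ n / 2 - 1 → zc n z (2 * i + 1) = 1 :=
      fun i a b => (vals i a b).1
    have heven' : ∀ i, 1 ≤ i → i ≤ n / 2 → zc n z (2 * i) = zc n z 2 := by
      intro i h1 h2
      rcases Nat.lt_or_ge i 2 with h0 | h0
      · have : i = 1 := by omega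
        subst this; norm_num
      · have h := (vals (i - 1) (by omega) (by omega)).2
        rwa [show 2 * (i - 1) + 2 = 2 * i by omega] at h
    have hprod : zc n z 1 * (zc n z 2) ^ (n / 2) = 2 :=
      (prod_eval n hn ⟨m, hm⟩ z hodd' heven').symm.trans hP2
    have hw2n : zc n z 2 ^ n = 4 * q := by
      have hsq : (zc n z 1 * (zc n z 2) ^ (n / 2)) ^ 2 = 4 := by rw [hprod]; norm_num
      rw [mul_pow, ← pow_mul, show n / 2 * 2 = n by omega] at hsq
      calc zc n z 2 ^ n = (q * zc n z 1 ^ 2) * zc n z 2 ^ n := by rw [hq1, one_mul]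
        _ = q * (zc n z 1 ^ 2 * zc n z 2 ^ n) := by ring
        _ = q * 4 := by rw [hsq]
        _ = 4 * q := by ring
    refine ⟨?_, ?_, fun _ => hq1, ?_⟩
    · rw [pow_succ, hw2n]
    · have h : (2 * q * zc n z 1 * zc n z 2) * zc n z 1
          = zc n z 2 ^ (n / 2 + 1) * zc n z 1 := by
        rw [pow_succ]
        calc (2 * q * zc n z 1 * zc n z 2) * zc n z 1
            = 2 * (q * zc n z 1 ^ 2) * zc n z 2 := by ring
          _ = 2 * zc n z 2 := by rw [hq1]; ring
          _ = (zc n z 1 * zc n z 2 ^ (n / 2)) * zc n z 2 := by rw [hprod]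
          _ = zc n z 2 ^ (n / 2) * zc n z 2 * zc n z 1 := by ring
      exact mul_right_cancel₀ hz1 h
    · intro _
      rw [hw2n]
      linear_combination 2 * q * hq1
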